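/- For every real number x ≥ 0, the Gaussian tail integral satisfies 1/(x + √(x² + 2)) ≤ e^{x²} ∫_x^∞ e^{-t²} dt ≤ 1/(x + √(x² + 4/π)). -/

import Mathlib

open MeasureTheory Real Set Filter Topology

noncomputable def Phi (x : ℝ) : ℝ := ∫ t in Set.Ici x, Real.exp (-t ^ 2)

lemma gauss_integrable : Integrable (fun t : ℝ => Real.exp (-t ^ 2)) := by
  simpa using integrable_exp_neg_mul_sq (by norm_num : (0:ℝ) < 1)

lemma gauss_cont : Continuous (fun t : ℝ => Real.exp (-t ^ 2)) := by
  continuity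

lemma Phi_eq (x : ℝ) : Phi x = Phi 0 - ∫ t in (0:ℝ)..x, Real.exp (-t ^ 2) := by
  have hI := gauss_integrable
  have h1 : ∀ a : ℝ, Phi a = (∫ t : ℝ, Real.exp (-t ^ 2)) - ∫ t in Set.Iio a, Real.exp (-t ^ 2) := by
    intro a
    have h2 := MeasureTheory.integral_add_compl (measurableSet_Iio (a := a)) hI
    rw [compl_Iio] at h2
    unfold Phi; linarith
  rw [← intervalIntegral.integral_Iic_sub_Iic hI.integrableOn hI.integrableOn,
    MeasureTheory.integral_Iic_eq_integral_Iio, MeasureTheory.integral_Iic_eq_integral_Iio,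
    h1 x, h1 0]
  ring

lemma Phi_hasDerivAt (x : ℝ) : HasDerivAt Phi (-Real.exp (-x ^ 2)) x := by
  have h : HasDerivAt (fun y => ∫ t in (0:ℝ)..y, Real.exp (-t ^ 2)) (Real.exp (-x ^ 2)) x :=
    intervalIntegral.integral_hasDerivAt_right (gauss_integrable.intervalIntegrable)
      (gauss_cont.stronglyMeasurableAtFilter volume (nhds x)) gauss_cont.continuousAt
  have h2 := (hasDerivAt_const x (Phi 0)).sub h
  have : Phi = fun y => Phi 0 - ∫ t in (0:ℝ)..y, Real.exp (-t ^ 2) := funext Phi_eq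
  rw [this]
  exact h2.congr_deriv (by ring)

lemma Phi_tendsto : Tendsto Phi atTop (𝓝 0) := by
  have h := intervalIntegral_tendsto_integral_Ioi 0 gauss_integrable.integrableOn tendsto_id
  have h0 : (∫ t in Set.Ioi (0:ℝ), Real.exp (-t ^ 2)) = Phi 0 :=
    (MeasureTheory.integral_Ici_eq_integral_Ioi).symm
  rw [h0] at h
  have : Phi = fun y => Phi 0 - ∫ t in (0:ℝ)..y, Real.exp (-t ^ 2) := funext Phi_eq
  rw [this]
  simpa using (tendsto_const_nhds (x := Phi 0)).sub h

noncomputable def G (c x : ℝ) : ℝ := (Real.sqrt (x ^ 2 + c) - x) / c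

noncomputable def W (c x : ℝ) : ℝ := Phi x - Real.exp (-x ^ 2) * G c x

lemma sqrt_hasDerivAt {c : ℝ} (hc : 0 < c) (x : ℝ) :
    HasDerivAt (fun y => Real.sqrt (y ^ 2 + c)) (x / Real.sqrt (x ^ 2 + c)) x := by
  have hx : x ^ 2 + c ≠ 0 := by positivity
  have hs : (0:ℝ) < Real.sqrt (x ^ 2 + c) := Real.sqrt_pos.2 (by positivity)
  have h1 : HasDerivAt (fun y : ℝ => y ^ 2 + c) (2 * x) x := by
    simpa using (hasDerivAt_pow 2 x).add_const c
  have h2 := (Real.hasDerivAt_sqrt hx).comp x h1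
  refine h2.congr_deriv ?_
  field_simp

lemma G_hasDerivAt {c : ℝ} (hc : 0 < c) (x : ℝ) :
    HasDerivAt (G c) ((x / Real.sqrt (x ^ 2 + c) - 1) / c) x :=
  ((sqrt_hasDerivAt hc x).sub (hasDerivAt_id x)).div_const c

lemma expneg_hasDerivAt (x : ℝ) :
    HasDerivAt (fun y : ℝ => Real.exp (-y ^ 2)) (-2 * x * Real.exp (-x ^ 2)) x := by
  have h1 : HasDerivAt (fun y : ℝ => -y ^ 2) (-(2 * x)) x := by
    have h := (hasDerivAt_pow 2 x).neg
    simp at h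
    exact h
  have := (Real.hasDerivAt_exp (-x ^ 2)).comp x h1
  refine this.congr_deriv ?_
  ring

lemma W_hasDerivAt {c : ℝ} (hc : 0 < c) (x : ℝ) :
    HasDerivAt (W c)
      (Real.exp (-x ^ 2) / (c * Real.sqrt (x ^ 2 + c)) *
        (2 * x ^ 3 + (2 * c - 1) * x - Real.sqrt (x ^ 2 + c) * (2 * x ^ 2 + c - 1))) x := by
  have hs : (0:ℝ) < Real.sqrt (x ^ 2 + c) := Real.sqrt_pos.2 (by positivity)
  have hs2 : Real.sqrt (x ^ 2 + c) ^ 2 = x ^ 2 + c := Real.sq_sqrt (by positivity)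
  have h := (Phi_hasDerivAt x).sub ((expneg_hasDerivAt x).mul (G_hasDerivAt hc x))
  refine h.congr_deriv ?_
  symm
  unfold G
  set s := Real.sqrt (x ^ 2 + c)
  field_simp
  linear_combination (-2 * x) * hs2

lemma key_le {c x : ℝ} (hc : 1 < c) (hcond : (2 - c) * x ^ 2 ≤ (c - 1) ^ 2) :
    2 * x ^ 3 + (2 * c - 1) * x ≤ Real.sqrt (x ^ 2 + c) * (2 * x ^ 2 + c - 1) := by
  have hc0 : (0:ℝ) < c := by linarith
  have hs : (0:ℝ) < Real.sqrt (x ^ 2 + c) := Real.sqrt_pos.2 (by positivity)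
  have hs2 : Real.sqrt (x ^ 2 + c) ^ 2 = x ^ 2 + c := Real.sq_sqrt (by positivity)
  set s := Real.sqrt (x ^ 2 + c)
  have hAB : (2 * x ^ 3 + (2 * c - 1) * x) ^ 2 ≤ (s * (2 * x ^ 2 + c - 1)) ^ 2 := by
    have h := mul_nonneg hc0.le (by linarith : (0:ℝ) ≤ (c - 1) ^ 2 - (2 - c) * x ^ 2)
    nlinarith [hs2]
  have hA : 0 < s * (2 * x ^ 2 + c - 1) :=
    mul_pos hs (by nlinarith [sq_nonneg x])
  nlinarith [hAB, hA]

lemma key_ge {c x : ℝ} (hc : 1 < c) (hx : 0 ≤ x) (hcond : (c - 1) ^ 2 ≤ (2 - c) * x ^ 2) :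
    Real.sqrt (x ^ 2 + c) * (2 * x ^ 2 + c - 1) ≤ 2 * x ^ 3 + (2 * c - 1) * x := by
  have hc0 : (0:ℝ) < c := by linarith
  have hs : (0:ℝ) < Real.sqrt (x ^ 2 + c) := Real.sqrt_pos.2 (by positivity)
  have hs2 : Real.sqrt (x ^ 2 + c) ^ 2 = x ^ 2 + c := Real.sq_sqrt (by positivity)
  set s := Real.sqrt (x ^ 2 + c)
  have hAB : (s * (2 * x ^ 2 + c - 1)) ^ 2 ≤ (2 * x ^ 3 + (2 * c - 1) * x) ^ 2 := by
    have h := mul_nonneg hc0.le (by linarith : (0:ℝ) ≤ (2 - c) * x ^ 2 - (c - 1) ^ 2)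
    nlinarith [hs2]
  have hB : 0 ≤ 2 * x ^ 3 + (2 * c - 1) * x := by nlinarith [pow_nonneg hx 3]
  have hA : 0 < s * (2 * x ^ 2 + c - 1) :=
    mul_pos hs (by nlinarith [sq_nonneg x])
  nlinarith [hAB, hA, hB]

lemma expneg_tendsto : Tendsto (fun x : ℝ => Real.exp (-x ^ 2)) atTop (𝓝 0) := by
  apply Real.tendsto_exp_atBot.comp
  exact tendsto_neg_atBot_iff.2 (tendsto_pow_atTop two_ne_zero)

lemma G_nonneg {c : ℝ} (hc : 0 < c) (x : ℝ) : 0 ≤ G c x := by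
  have h1 : |x| ≤ Real.sqrt (x ^ 2 + c) := by
    rw [← Real.sqrt_sq_eq_abs]
    exact Real.sqrt_le_sqrt (by linarith)
  have := le_trans (le_abs_self x) h1
  unfold G
  have hd : 0 ≤ Real.sqrt (x ^ 2 + c) - x := by linarith
  positivity

lemma G_le {c : ℝ} (hc : 0 < c) {x : ℝ} (hx : 0 ≤ x) : G c x ≤ Real.sqrt c / c := by
  have h1 : Real.sqrt (x ^ 2 + c) ≤ x + Real.sqrt c := by
    rw [show x ^ 2 + c = x ^ 2 + c from rfl]
    have h2 : x ^ 2 + c ≤ (x + Real.sqrt c) ^ 2 := by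
      have := Real.sq_sqrt hc.le
      nlinarith [mul_nonneg hx (Real.sqrt_nonneg c)]
    calc Real.sqrt (x ^ 2 + c) ≤ Real.sqrt ((x + Real.sqrt c) ^ 2) := Real.sqrt_le_sqrt h2
      _ = x + Real.sqrt c := by
          rw [Real.sqrt_sq (by positivity)]
  unfold G
  gcongr (?_) / c
  linarith

lemma W_tendsto {c : ℝ} (hc : 0 < c) : Tendsto (W c) atTop (𝓝 0) := by
  have h1 : Tendsto (fun x => Real.exp (-x ^ 2) * G c x) atTop (𝓝 0) := by
    apply squeeze_zero' (g := fun x => Real.exp (-x ^ 2) * (Real.sqrt c / c))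
    · filter_upwards [eventually_ge_atTop (0:ℝ)] with y _
      exact mul_nonneg (Real.exp_pos _).le (G_nonneg hc y)
    · filter_upwards [eventually_ge_atTop (0:ℝ)] with y hy
      exact mul_le_mul_of_nonneg_left (G_le hc hy) (Real.exp_pos _).le
    · simpa using expneg_tendsto.mul_const (Real.sqrt c / c)
  exact (by simpa using Phi_tendsto.sub h1 :
    Tendsto (fun x => Phi x - Real.exp (-x ^ 2) * G c x) atTop (𝓝 0))

lemma W_deriv_nonpos {c x : ℝ} (hc : 1 < c) (hcond : (2 - c) * x ^ 2 ≤ (c - 1) ^ 2) :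
    deriv (W c) x ≤ 0 := by
  have hc0 : (0:ℝ) < c := by linarith
  rw [(W_hasDerivAt hc0 x).deriv]
  have hk := key_le hc hcond
  have hpos : 0 < Real.exp (-x ^ 2) / (c * Real.sqrt (x ^ 2 + c)) := by
    have : 0 < Real.sqrt (x ^ 2 + c) := Real.sqrt_pos.2 (by positivity)
    positivity
  exact mul_nonpos_of_nonneg_of_nonpos hpos.le (by linarith)

lemma W_deriv_nonneg {c x : ℝ} (hc : 1 < c) (hx : 0 ≤ x)
    (hcond : (c - 1) ^ 2 ≤ (2 - c) * x ^ 2) : 0 ≤ deriv (W c) x := by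
  have hc0 : (0:ℝ) < c := by linarith
  rw [(W_hasDerivAt hc0 x).deriv]
  have hk := key_ge hc hx hcond
  have hpos : 0 < Real.exp (-x ^ 2) / (c * Real.sqrt (x ^ 2 + c)) := by
    have : 0 < Real.sqrt (x ^ 2 + c) := Real.sqrt_pos.2 (by positivity)
    positivity
  exact mul_nonneg hpos.le (by linarith)

lemma W_two_nonneg (x : ℝ) : 0 ≤ W 2 x := by
  have hmono : Antitone (W 2) := by
    refine antitone_of_deriv_nonpos (fun y => (W_hasDerivAt two_pos y).differentiableAt)
      (fun y => ?_)
    exact W_deriv_nonpos one_lt_two (by nlinarith [sq_nonneg y])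
  exact le_of_tendsto (W_tendsto two_pos)
    (eventually_atTop.2 ⟨x, fun y hy => hmono hy⟩)

lemma pi_facts : 1 < 4 / Real.pi ∧ 4 / Real.pi < 2 := by
  have h1 := Real.pi_gt_three
  have h2 := Real.pi_lt_d2
  constructor
  · rw [lt_div_iff₀ Real.pi_pos]; linarith
  · rw [div_lt_iff₀ Real.pi_pos]; linarith

lemma Phi_zero : Phi 0 = Real.sqrt Real.pi / 2 := by
  unfold Phi
  rw [MeasureTheory.integral_Ici_eq_integral_Ioi]
  have := integral_gaussian_Ioi 1
  simpa using this

lemma W_c4_zero : W (4 / Real.pi) 0 = 0 := by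
  have hpi : (0:ℝ) < Real.pi := Real.pi_pos
  have hsp : Real.sqrt Real.pi > 0 := Real.sqrt_pos.2 hpi
  have hsq : Real.sqrt Real.pi ^ 2 = Real.pi := Real.sq_sqrt hpi.le
  have h4 : Real.sqrt (4 / Real.pi) = 2 / Real.sqrt Real.pi := by
    rw [show (4:ℝ) / Real.pi = (2 / Real.sqrt Real.pi) ^ 2 by
      rw [div_pow, hsq]; norm_num]
    exact Real.sqrt_sq (by positivity)
  unfold W G
  rw [Phi_zero]
  rw [show (0:ℝ) ^ 2 + 4 / Real.pi = 4 / Real.pi by ring, h4]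
  rw [show -(0:ℝ) ^ 2 = 0 by ring, Real.exp_zero]
  field_simp
  linear_combination (4:ℝ) * hsq

lemma W_c4_nonpos {x : ℝ} (hx : 0 ≤ x) : W (4 / Real.pi) x ≤ 0 := by
  obtain ⟨hc1, hc2⟩ := pi_facts
  set c : ℝ := 4 / Real.pi with hcdef
  have hc0 : (0:ℝ) < c := by linarith
  set x0 : ℝ := Real.sqrt ((c - 1) ^ 2 / (2 - c)) with hx0def
  have hx0nn : 0 ≤ x0 := Real.sqrt_nonneg _
  have hx0sq : x0 ^ 2 = (c - 1) ^ 2 / (2 - c) := Real.sq_sqrt (div_nonneg (sq_nonneg _) (by linarith))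
  have hdiff : ∀ y, DifferentiableAt ℝ (W c) y :=
    fun y => (W_hasDerivAt hc0 y).differentiableAt
  rcases le_or_gt x x0 with hle | hgt
  · -- antitone on [0, x0]
    have hanti : AntitoneOn (W c) (Set.Icc 0 x0) := by
      refine antitoneOn_of_deriv_nonpos (convex_Icc 0 x0)
        (fun y _ => (hdiff y).continuousAt.continuousWithinAt)
        (fun y _ => (hdiff y).differentiableWithinAt) (fun y hy => ?_)
      rw [interior_Icc] at hy
      refine W_deriv_nonpos hc1 ?_
      have hy2 : y ^ 2 ≤ x0 ^ 2 := by nlinarith [hy.1, hy.2]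
      rw [hx0sq, le_div_iff₀ (by linarith : (0:ℝ) < 2 - c)] at hy2
      linear_combination hy2
    have := hanti (Set.left_mem_Icc.2 hx0nn) (Set.mem_Icc.2 ⟨hx, hle⟩) hx
    rw [W_c4_zero] at this
    exact this
  · -- monotone on [x0, ∞)
    have hmono : MonotoneOn (W c) (Set.Ici x0) := by
      refine monotoneOn_of_deriv_nonneg (convex_Ici x0)
        (fun y _ => (hdiff y).continuousAt.continuousWithinAt)
        (fun y _ => (hdiff y).differentiableWithinAt) (fun y hy => ?_)
      rw [interior_Ici] at hy
      refine W_deriv_nonneg hc1 (le_trans hx0nn hy.le) ?_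
      have hy2 : x0 ^ 2 ≤ y ^ 2 := pow_le_pow_left₀ hx0nn (Set.mem_Ioi.mp hy).le 2
      rw [hx0sq, div_le_iff₀ (by linarith : (0:ℝ) < 2 - c)] at hy2
      linear_combination hy2
    refine ge_of_tendsto (W_tendsto hc0) ?_
    filter_upwards [eventually_ge_atTop x] with y hy
    exact hmono (Set.mem_Ici.2 hgt.le) (Set.mem_Ici.2 (le_trans hgt.le hy)) hy

lemma G_eq {c : ℝ} (hc : 0 < c) (x : ℝ) :
    1 / (x + Real.sqrt (x ^ 2 + c)) = G c x := by
  have hs2 : Real.sqrt (x ^ 2 + c) ^ 2 = x ^ 2 + c := Real.sq_sqrt (by positivity)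
  have habs : |x| < Real.sqrt (x ^ 2 + c) := by
    rw [← Real.sqrt_sq_eq_abs]
    exact Real.sqrt_lt_sqrt (sq_nonneg x) (by linarith)
  have hpos : 0 < x + Real.sqrt (x ^ 2 + c) := by
    have := neg_abs_le x
    linarith
  unfold G
  rw [div_eq_div_iff hpos.ne' hc.ne']
  linear_combination -hs2

/-- For every real `x ≥ 0`, the Gaussian tail integral satisfies
`1/(x + √(x² + 2)) ≤ e^{x²} ∫_x^∞ e^{-t²} dt ≤ 1/(x + √(x² + 4/π))`. -/
theorem gaussian_tail_bounds (x : ℝ) (hx : 0 ≤ x) :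
    1 / (x + Real.sqrt (x ^ 2 + 2)) ≤
      Real.exp (x ^ 2) * (∫ t in Set.Ici x, Real.exp (-t ^ 2)) ∧
    Real.exp (x ^ 2) * (∫ t in Set.Ici x, Real.exp (-t ^ 2)) ≤
      1 / (x + Real.sqrt (x ^ 2 + 4 / Real.pi)) := by
  have hc4 : (0:ℝ) < 4 / Real.pi := by positivity
  have hexp : Real.exp (x ^ 2) * Real.exp (-x ^ 2) = 1 := by
    rw [← Real.exp_add]; simp
  have hP : (∫ t in Set.Ici x, Real.exp (-t ^ 2)) = Phi x := rfl
  constructor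
  · rw [G_eq two_pos, hP]
    have h := mul_nonneg (Real.exp_pos (x ^ 2)).le (W_two_nonneg x)
    unfold W at h
    rw [mul_sub, ← mul_assoc, hexp, one_mul] at h
    linarith
  · rw [G_eq hc4, hP]
    have h := mul_nonpos_of_nonneg_of_nonpos (Real.exp_pos (x ^ 2)).le (W_c4_nonpos hx)
    unfold W at h
    rw [mul_sub, ← mul_assoc, hexp, one_mul] at h
    linarith
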